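/- Let f : S_n → ℝ be linear, f = Σ_{i,j} c_{i,j} x_{i,j}, and suppose dist(f(π), {0,1}) ≤ ε for all π ∈ S_n. Then for all i_1, i_2, j_1, j_2 ∈ [n], the quantity d = c_{i_1,j_1} + c_{i_2,j_2} − c_{i_1,j_2} − c_{i_2,j_1} satisfies dist(d, {0, 1, −1}) ≤ 2ε. -/
import Mathlib


theorem stmt17 (n : ℕ) (c : Fin n → Fin n → ℝ)
    (f : Equiv.Perm (Fin n) → ℝ)
    (hf : ∀ π, f π = ∑ i, c i (π i))
    (ε : ℝ) (hdist : ∀ π, min |f π| |f π - 1| ≤ ε)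
    (i1 i2 j1 j2 : Fin n) :
    min |c i1 j1 + c i2 j2 - c i1 j2 - c i2 j1|
      (min |c i1 j1 + c i2 j2 - c i1 j2 - c i2 j1 - 1|
           |c i1 j1 + c i2 j2 - c i1 j2 - c i2 j1 + 1|) ≤ 2 * ε := by
  set d := c i1 j1 + c i2 j2 - c i1 j2 - c i2 j1 with hd
  have hε : 0 ≤ ε := le_trans (le_min (abs_nonneg _) (abs_nonneg _)) (hdist 1)
  by_cases h1 : i1 = i2
  · subst h1
    have hd0 : d = 0 := by rw [hd]; ring
    calc min |d| (min |d - 1| |d + 1|) ≤ |d| := min_le_left _ _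
      _ = 0 := by rw [hd0, abs_zero]
      _ ≤ 2 * ε := by linarith
  by_cases h2 : j1 = j2
  · subst h2
    have hd0 : d = 0 := by rw [hd]; ring
    calc min |d| (min |d - 1| |d + 1|) ≤ |d| := min_le_left _ _
      _ = 0 := by rw [hd0, abs_zero]
      _ ≤ 2 * ε := by linarith
  · set k := Equiv.swap i1 j1 i2 with hk
    have hkj1 : k ≠ j1 := by
      intro h
      apply h1
      have : Equiv.swap i1 j1 i2 = Equiv.swap i1 j1 i1 := by
        rw [Equiv.swap_apply_left]; exact h
      exact ((Equiv.swap i1 j1).injective this).symm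
    set α : Equiv.Perm (Fin n) := Equiv.swap j2 k * Equiv.swap i1 j1 with hα
    have hα1 : α i1 = j1 := by
      show Equiv.swap j2 k (Equiv.swap i1 j1 i1) = j1
      rw [Equiv.swap_apply_left]
      exact Equiv.swap_apply_of_ne_of_ne h2 (Ne.symm hkj1)
    have hα2 : α i2 = j2 := by
      show Equiv.swap j2 k (Equiv.swap i1 j1 i2) = j2
      rw [← hk, Equiv.swap_apply_right]
    set β : Equiv.Perm (Fin n) := Equiv.swap j1 j2 * α with hβ
    have hβ1 : β i1 = j2 := by
      show Equiv.swap j1 j2 (α i1) = j2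
      rw [hα1, Equiv.swap_apply_left]
    have hβ2 : β i2 = j1 := by
      show Equiv.swap j1 j2 (α i2) = j1
      rw [hα2, Equiv.swap_apply_right]
    have hout : ∀ i, i ≠ i1 → i ≠ i2 → β i = α i := by
      intro i hi1 hi2
      show Equiv.swap j1 j2 (α i) = α i
      apply Equiv.swap_apply_of_ne_of_ne
      · intro h; exact hi1 (α.injective (h.trans hα1.symm))
      · intro h; exact hi2 (α.injective (h.trans hα2.symm))
    have key : f α - f β = d := by
      rw [hf, hf, ← Finset.sum_sub_distrib]
      have hzero : ∀ i ∈ Finset.univ, i ∉ ({i1, i2} : Finset (Fin n)) →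
          c i (α i) - c i (β i) = 0 := by
        intro i _ hi
        simp only [Finset.mem_insert, Finset.mem_singleton, not_or] at hi
        rw [hout i hi.1 hi.2, sub_self]
      rw [← Finset.sum_subset (Finset.subset_univ ({i1, i2} : Finset (Fin n))) hzero,
        Finset.sum_pair h1, hα1, hα2, hβ1, hβ2, hd]
      ring
    have hkey : f α - f β = d := key
    rcases min_le_iff.mp (hdist α) with hA | hA <;>
      rcases min_le_iff.mp (hdist β) with hB | hB
    · obtain ⟨ha1, ha2⟩ := abs_le.mp hA
      obtain ⟨hb1, hb2⟩ := abs_le.mp hB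
      calc min |d| (min |d - 1| |d + 1|) ≤ |d| := min_le_left _ _
        _ ≤ 2 * ε := abs_le.mpr ⟨by linarith, by linarith⟩
    · obtain ⟨ha1, ha2⟩ := abs_le.mp hA
      obtain ⟨hb1, hb2⟩ := abs_le.mp hB
      calc min |d| (min |d - 1| |d + 1|)
          ≤ min |d - 1| |d + 1| := min_le_right _ _
        _ ≤ |d + 1| := min_le_right _ _
        _ ≤ 2 * ε := abs_le.mpr ⟨by linarith, by linarith⟩
    · obtain ⟨ha1, ha2⟩ := abs_le.mp hA
      obtain ⟨hb1, hb2⟩ := abs_le.mp hB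
      calc min |d| (min |d - 1| |d + 1|)
          ≤ min |d - 1| |d + 1| := min_le_right _ _
        _ ≤ |d - 1| := min_le_left _ _
        _ ≤ 2 * ε := abs_le.mpr ⟨by linarith, by linarith⟩
    · obtain ⟨ha1, ha2⟩ := abs_le.mp hA
      obtain ⟨hb1, hb2⟩ := abs_le.mp hB
      calc min |d| (min |d - 1| |d + 1|) ≤ |d| := min_le_left _ _
        _ ≤ 2 * ε := abs_le.mpr ⟨by linarith, by linarith⟩
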